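/- Let 1/2 ≤ c < 1 and m > 0 with cosh(m) ≤ (1+c)/(1−c). For every z ∈ (0, m] and every x with 0 ≤ x and z − (1−c)x ≥ 0, the function Φ(x) = sinh(cx) + sinh(z−(1−c)x) − sinh(z) + x is nonnegative. Consequently, if y solves sinh(y) + sinh(y−x+z) = sinh(z) − x with 0 ≤ y ≤ x, then y ≤ c·x. -/

import Mathlib

theorem damping_estimate (c m : ℝ) (hc₁ : 1 / 2 ≤ c) (hc₂ : c < 1) (hm : 0 < m)
    (hcm : Real.cosh m ≤ (1 + c) / (1 - c)) :
    ∀ z : ℝ, 0 < z → z ≤ m → ∀ x : ℝ, 0 ≤ x → 0 ≤ z - (1 - c) * x →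
      (0 ≤ Real.sinh (c * x) + Real.sinh (z - (1 - c) * x) - Real.sinh z + x) ∧
      (∀ y : ℝ, Real.sinh y + Real.sinh (y - x + z) = Real.sinh z - x →
        0 ≤ y → y ≤ x → y ≤ c * x) := by
  intro z hz hzm x hx hzx
  have hc0 : 0 < c := lt_of_lt_of_le (by norm_num) hc₁
  have h1c : 0 < 1 - c := by linarith
  -- (1-c) * cosh z ≤ 1 + c
  have hkey : (1 - c) * Real.cosh z ≤ 1 + c := by
    have h1 : Real.cosh z ≤ Real.cosh m := by
      rw [Real.cosh_le_cosh, abs_of_pos hz, abs_of_pos hm]; exact hzm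
    have h2 : Real.cosh z ≤ (1 + c) / (1 - c) := h1.trans hcm
    calc (1 - c) * Real.cosh z ≤ (1 - c) * ((1 + c) / (1 - c)) :=
          mul_le_mul_of_nonneg_left h2 h1c.le
      _ = 1 + c := by field_simp
  set φ : ℝ → ℝ := fun t => Real.sinh (c * t) + Real.sinh (z - (1 - c) * t) - Real.sinh z + t
    with hφ
  have hder : ∀ t : ℝ, HasDerivAt φ
      (Real.cosh (c * t) * c + Real.cosh (z - (1 - c) * t) * (-(1 - c)) + 1) t := by
    intro t
    have h1 : HasDerivAt (fun t : ℝ => c * t) c t := by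
      simpa using (hasDerivAt_id t).const_mul c
    have h2 : HasDerivAt (fun t : ℝ => z - (1 - c) * t) (-(1 - c)) t := by
      simpa using ((hasDerivAt_id t).const_mul (1 - c)).const_sub z
    have h3 := (Real.hasDerivAt_sinh (c * t)).comp t h1
    have h4 := (Real.hasDerivAt_sinh (z - (1 - c) * t)).comp t h2
    simpa [hφ, Pi.add_def, Function.comp_def] using ((h3.add h4).sub_const (Real.sinh z)).add (hasDerivAt_id' t)
  have hΦ : 0 ≤ φ x := by
    have hmono : MonotoneOn φ (Set.Icc 0 x) := by
      apply monotoneOn_of_deriv_nonneg (convex_Icc 0 x)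
      · exact fun t _ => (hder t).continuousAt.continuousWithinAt
      · exact fun t _ => (hder t).differentiableAt.differentiableWithinAt
      · intro t ht
        rw [interior_Icc] at ht
        rw [(hder t).deriv]
        have ht0 : 0 ≤ t := ht.1.le
        have htx : t ≤ x := ht.2.le
        have harg : 0 ≤ z - (1 - c) * t := by nlinarith
        have h5 : Real.cosh (z - (1 - c) * t) ≤ Real.cosh z := by
          rw [Real.cosh_le_cosh, abs_of_nonneg harg, abs_of_pos hz]; nlinarith
        have h6 : 1 ≤ Real.cosh (c * t) := Real.one_le_cosh _
        nlinarith
    have h0 : φ 0 = 0 := by simp [hφ]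
    linarith [hmono (Set.left_mem_Icc.2 hx) (Set.mem_Icc.2 ⟨hx, le_refl x⟩) hx, h0]
  refine ⟨hΦ, ?_⟩
  intro y heq hy0 hyx
  by_contra hlt
  push_neg at hlt
  have h1 : Real.sinh (c * x) < Real.sinh y := Real.sinh_lt_sinh.2 hlt
  have h2 : Real.sinh (z - (1 - c) * x) < Real.sinh (y - x + z) := by
    apply Real.sinh_lt_sinh.2; linarith
  simp only [hφ] at hΦ
  linarith
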